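/- Let B be an integral domain containing a field k of characteristic zero, D a nonzero locally nilpotent k-derivation on B with kernel A, and let r ∈ B be a local slice of D, i.e., D(r) ∈ A \ {0}. Then the localization B_{Dr} of B at Dr satisfies B_{Dr} = A_{Dr}[r], and r is transcendental over A_{Dr}; in particular B_{Dr} is a polynomial ring in one variable over A_{Dr}, provided D²r = 0. -/
import Mathlib


/-- A derivation is locally nilpotent if every element is killed by some iterate. -/
def IsLND {k B : Type*} [CommRing k] [CommRing B] [Algebra k B]
    (D : Derivation k B B) : Prop :=
  ∀ b : B, ∃ n : ℕ, (⇑D)^[n] b = 0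

/-- `ndeg D b n` says that `n` is the `D`-degree of `b`, i.e. the largest `m` with
`D^[m] b ≠ 0`. -/
def ndeg {k B : Type*} [CommRing k] [CommRing B] [Algebra k B]
    (D : Derivation k B B) (b : B) (n : ℕ) : Prop :=
  (⇑D)^[n] b ≠ 0 ∧ (⇑D)^[n + 1] b = 0

/-- A derivation is irreducible if the ideal generated by its image is not contained
in any proper principal ideal. -/
def IsIrred {k B : Type*} [CommRing k] [CommRing B] [Algebra k B]
    (D : Derivation k B B) : Prop :=
  ∀ b : B, Ideal.span (Set.range (⇑D)) ≤ Ideal.span {b} → IsUnit b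

theorem aux_indep {k B : Type*} [Field k] [CharZero k] [CommRing B] [IsDomain B] [Algebra k B]
    (D : Derivation k B B) (r : B) (hr : D r ≠ 0) :
    ∀ (n : ℕ) (c : ℕ → B), (∀ i, D (c i) = 0) →
      (∑ i ∈ Finset.range (n + 1), c i * r ^ i) = 0 → ∀ i ≤ n, c i = 0 := by
  haveI : CharZero B := charZero_of_injective_algebraMap (algebraMap k B).injective
  intro n
  induction n with
  | zero =>
    intro c hc hsum i hi
    interval_cases i
    simpa using hsum
  | succ n ih =>
    intro c hc hsum
    -- apply D to the sum
    have hd : D (∑ i ∈ Finset.range (n + 2), c i * r ^ i) = 0 := by rw [hsum, map_zero]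
    rw [map_sum] at hd
    have hterm : ∀ j, D (c j * r ^ j) = (j : B) * c j * r ^ (j - 1) * D r := by
      intro j
      simp only [D.leibniz, hc, smul_zero, add_zero, D.leibniz_pow, smul_eq_mul, nsmul_eq_mul]
      ring
    simp only [hterm] at hd
    rw [Finset.sum_range_succ'] at hd
    simp only [Nat.cast_zero, zero_mul, add_zero] at hd
    have hd2 : (∑ i ∈ Finset.range (n + 1), ((i : B) + 1) * c (i + 1) * r ^ i) * D r = 0 := by
      rw [Finset.sum_mul, ← hd]
      apply Finset.sum_congr rfl
      intro i _
      push_cast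
      simp only [Nat.add_sub_cancel]
    have hd3 : ∑ i ∈ Finset.range (n + 1), (((i : B) + 1) * c (i + 1)) * r ^ i = 0 := by
      rcases mul_eq_zero.mp hd2 with h | h
      · exact h
      · exact absurd h hr
    have hnext : ∀ i ≤ n, ((i : B) + 1) * c (i + 1) = 0 := by
      apply ih _ _ hd3
      intro i
      have : D (((i : B) + 1)) = 0 := by
        have := D.map_natCast (i + 1)
        push_cast at this
        exact this
      rw [D.leibniz, hc, this, smul_zero, smul_zero, add_zero]
    have hsucc : ∀ i ≤ n, c (i + 1) = 0 := by
      intro i hi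
      have h := hnext i hi
      have hne : ((i : B) + 1) ≠ 0 := by
        have : ((i + 1 : ℕ) : B) ≠ 0 := Nat.cast_ne_zero.mpr (Nat.succ_ne_zero i)
        push_cast at this
        exact this
      exact (mul_eq_zero.mp h).resolve_left hne
    have hc0 : c 0 = 0 := by
      rw [Finset.sum_range_succ'] at hsum
      simp only [pow_zero, mul_one] at hsum
      have : ∑ i ∈ Finset.range (n + 1), c (i + 1) * r ^ (i + 1) = 0 := by
        apply Finset.sum_eq_zero
        intro i hi
        rw [hsucc i (Nat.lt_succ_iff.mp (Finset.mem_range.mp hi)), zero_mul]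
      rwa [this, zero_add] at hsum
    intro i hi
    cases i with
    | zero => exact hc0
    | succ j => exact hsucc j (Nat.lt_succ_iff.mp hi)

theorem aux_gen {k B : Type*} [Field k] [CharZero k] [CommRing B] [IsDomain B] [Algebra k B]
    (D : Derivation k B B) (r : B) (hslice : D (D r) = 0) :
    ∀ (n : ℕ) (b : B), (⇑D)^[n] b = 0 →
      ∃ (m N : ℕ) (c : ℕ → B), 0 < N ∧ (∀ i, D (c i) = 0) ∧
        (N : B) * ((D r) ^ m * b) = ∑ i ∈ Finset.range n, c i * r ^ i := by
  intro n
  induction n with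
  | zero =>
    intro b hb
    simp only [Function.iterate_zero, id_eq] at hb
    exact ⟨0, 1, fun _ => 0, Nat.one_pos, fun _ => D.map_zero, by simp [hb]⟩
  | succ n ih =>
    intro b hb
    have hDb : (⇑D)^[n] (D b) = 0 := by
      rw [← Function.iterate_succ_apply]
      exact hb
    obtain ⟨m, N, c, hN, hc, heq⟩ := ih (D b) hDb
    set e : B := (N * n.factorial : ℕ) * ((D r) ^ (m + 1) * b)
        - ∑ i ∈ Finset.range n, ((n.factorial / (i + 1) : ℕ) : B) * (c i * r ^ (i + 1)) with he
    have hDrpow : ∀ j : ℕ, D ((D r) ^ j) = 0 := by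
      intro j
      rw [D.leibniz_pow, hslice, smul_zero, smul_zero]
    have hDe : D e = 0 := by
      rw [he, map_sub, map_sum, D.leibniz, D.map_natCast, smul_zero, add_zero,
        D.leibniz, hDrpow, smul_zero, add_zero]
      have hterm : ∀ i ∈ Finset.range n,
          D (((n.factorial / (i + 1) : ℕ) : B) * (c i * r ^ (i + 1)))
            = (n.factorial : B) * (c i * r ^ i) * D r := by
        intro i hi
        rw [D.leibniz, D.map_natCast, smul_zero, add_zero, D.leibniz, hc, smul_zero, add_zero,
          D.leibniz_pow]
        simp only [smul_eq_mul, nsmul_eq_mul, Nat.add_sub_cancel]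
        have hdvd : ((n.factorial / (i + 1) : ℕ) : B) * ((i + 1 : ℕ) : B) = (n.factorial : B) := by
          rw [← Nat.cast_mul, Nat.div_mul_cancel (Nat.dvd_factorial (Nat.succ_pos i)
            (Finset.mem_range.mp hi))]
        push_cast at hdvd ⊢
        linear_combination (c i * r ^ i * D r) * hdvd
      rw [Finset.sum_congr rfl hterm]
      have hsum : ∑ i ∈ Finset.range n, (n.factorial : B) * (c i * r ^ i) * D r
          = (n.factorial : B) * D r * ∑ i ∈ Finset.range n, c i * r ^ i := by
        rw [Finset.mul_sum]
        exact Finset.sum_congr rfl fun i _ => by ring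
      rw [hsum, ← heq]
      simp only [smul_eq_mul]
      push_cast
      ring
    refine ⟨m + 1, N * n.factorial, fun j => if j = 0 then e else ((n.factorial / j : ℕ) : B) * c (j - 1),
      Nat.mul_pos hN n.factorial_pos, ?_, ?_⟩
    · intro j
      cases j with
      | zero => simpa using hDe
      | succ j =>
        simp only [Nat.succ_ne_zero, if_false, Nat.add_sub_cancel]
        rw [D.leibniz, D.map_natCast, smul_zero, add_zero, hc, smul_zero]
    · rw [Finset.sum_range_succ']
      simp only [Nat.succ_ne_zero, if_false, Nat.add_sub_cancel, if_pos rfl, pow_zero, mul_one]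
      rw [he]
      simp only [mul_assoc]
      push_cast
      ring

/-- If `r` is a local slice of a nonzero locally nilpotent derivation `D`
(so `D r ∈ ker D \ {0}`, i.e. `D² r = 0` and `D r ≠ 0`), then in the localization
`B_{Dr}` one has `B_{Dr} = A_{Dr}[r]` with `r` transcendental over `A_{Dr}`, where
`A = ker D`.  Here `A_{Dr}` is realized as the subalgebra of `B_{Dr}` generated by
the image of `A` together with the inverse of `D r`. -/
theorem localization_at_slice_is_polynomial_ring {k B : Type*} [Field k] [CharZero k]
    [CommRing B] [IsDomain B] [Algebra k B]
    (D : Derivation k B B) (hD : D ≠ 0) (hlnd : IsLND D)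
    (r : B) (hslice : D (D r) = 0) (hr : D r ≠ 0) :
    letI L := Localization.Away (D r)
    letI A' : Subalgebra k L :=
      Algebra.adjoin k
        ((algebraMap B L '' {b : B | D b = 0}) ∪ {Localization.Away.invSelf (D r)})
    Algebra.adjoin A' ({algebraMap B L r} : Set L) = ⊤ ∧
      Transcendental A' (algebraMap B L r) := by
  set L := Localization.Away (D r) with hLdef
  set A' : Subalgebra k L :=
    Algebra.adjoin k
      ((algebraMap B L '' {b : B | D b = 0}) ∪ {Localization.Away.invSelf (D r)}) with hA'def
  set I := Localization.Away.invSelf (D r) with hIdef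
  set P := algebraMap B L (D r) with hPdef
  -- basic facts
  have hinj : Function.Injective (algebraMap B L) :=
    IsLocalization.injective L (powers_le_nonZeroDivisors_of_noZeroDivisors hr)
  have hmulinv : P * I = 1 := by
    have h1 : I = Localization.mk 1 ⟨D r, Submonoid.mem_powers _⟩ := rfl
    rw [hPdef, h1, ← Localization.mk_one_eq_algebraMap, Localization.mk_mul, mul_one, one_mul,
      Localization.mk_self ⟨D r, Submonoid.mem_powers _⟩]
  have hpowinv : ∀ j : ℕ, P ^ j * I ^ j = 1 :=
    fun j => by rw [← mul_pow, hmulinv, one_pow]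
  have hscal : ∀ c : k, algebraMap k L c = algebraMap B L (algebraMap k B c) := fun c => rfl
  have hDrpow : ∀ j : ℕ, D ((D r) ^ j) = 0 := by
    intro j
    rw [D.leibniz_pow, hslice, smul_zero, smul_zero]
  -- membership facts
  have hkerA' : ∀ a : B, D a = 0 → algebraMap B L a ∈ A' := fun a ha =>
    Algebra.subset_adjoin (Or.inl ⟨a, ha, rfl⟩)
  have hinvA' : I ∈ A' := Algebra.subset_adjoin (Or.inr rfl)
  set S := Algebra.adjoin A' ({algebraMap B L r} : Set L) with hSdef
  have hA'S : ∀ x ∈ A', x ∈ S := fun x hx => S.algebraMap_mem ⟨x, hx⟩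
  have hrS : algebraMap B L r ∈ S := Algebra.subset_adjoin rfl
  -- every image of B lies in S
  have hBS : ∀ b : B, algebraMap B L b ∈ S := by
    intro b
    obtain ⟨n, hn⟩ := hlnd b
    obtain ⟨m, N, c, hN, hc, heq⟩ := aux_gen D r hslice n b hn
    have heqL := congrArg (algebraMap B L) heq
    rw [map_mul, map_mul, map_pow, map_sum] at heqL
    simp only [map_mul, map_pow, map_natCast] at heqL
    -- heqL : (N : L) * (P ^ m * b̄) = ∑ ...
    have hNne : ((N : k)) ≠ 0 := Nat.cast_ne_zero.mpr hN.ne'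
    have hNinv : algebraMap k L ((N : k)⁻¹) * (N : L) = 1 := by
      rw [← map_natCast (algebraMap k L) N, ← map_mul, inv_mul_cancel₀ hNne, map_one]
    have hb : algebraMap B L b
        = algebraMap k L ((N : k)⁻¹) * I ^ m * ((N : L) * (P ^ m * algebraMap B L b)) := by
      rw [show algebraMap k L ((N : k)⁻¹) * I ^ m * ((N : L) * (P ^ m * algebraMap B L b))
          = (algebraMap k L ((N : k)⁻¹) * (N : L)) * ((P ^ m * I ^ m) * algebraMap B L b)
        from by ring, hNinv, hpowinv, one_mul, one_mul]
    rw [hb, heqL]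
    refine mul_mem (mul_mem (hA'S _ (A'.algebraMap_mem _)) (pow_mem (hA'S _ hinvA') m)) ?_
    exact Subalgebra.sum_mem S fun i _ => mul_mem (hA'S _ (hkerA' _ (hc i))) (pow_mem hrS i)
  -- Part 1
  have hpart1 : S = ⊤ := by
    rw [eq_top_iff]
    rintro x -
    obtain ⟨⟨b, s⟩, hx⟩ := IsLocalization.surj (M := Submonoid.powers (D r)) (S := L) x
    obtain ⟨mm, hs⟩ := s.2
    have h1 : algebraMap B L (s : B) * I ^ mm = 1 := by
      rw [← hs, map_pow]
      exact hpowinv mm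
    have hx' : x = algebraMap B L b * I ^ mm := by
      calc x = x * (algebraMap B L (s : B) * I ^ mm) := by rw [h1, mul_one]
        _ = (x * algebraMap B L (s : B)) * I ^ mm := by ring
        _ = _ := by rw [hx]
    rw [hx']
    exact mul_mem (hBS b) (pow_mem (hA'S _ hinvA') mm)
  -- characterization of A'
  have hchar : ∀ x ∈ A', ∃ (a : B) (j : ℕ), D a = 0 ∧ x = algebraMap B L a * I ^ j := by
    intro x hx
    refine Algebra.adjoin_induction ?_ ?_ ?_ ?_ hx
    · rintro y (⟨a, ha, rfl⟩ | rfl)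
      · exact ⟨a, 0, ha, by rw [pow_zero, mul_one]⟩
      · exact ⟨1, 1, D.map_one_eq_zero, by rw [map_one, pow_one, one_mul]⟩
    · intro cc
      exact ⟨algebraMap k B cc, 0, by simp, by rw [hscal, pow_zero, mul_one]⟩
    · rintro y z - - ⟨a, ja, ha, rfl⟩ ⟨a', ja', ha', rfl⟩
      refine ⟨a * (D r) ^ ja' + a' * (D r) ^ ja, ja + ja', ?_, ?_⟩
      · simp [D.leibniz, hDrpow, ha, ha']
      · simp only [map_add, map_mul, map_pow, ← hPdef]
        linear_combination (-(algebraMap B L a * I ^ ja)) * hpowinv ja'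
          + (-(algebraMap B L a' * I ^ ja')) * hpowinv ja
    · rintro y z - - ⟨a, ja, ha, rfl⟩ ⟨a', ja', ha', rfl⟩
      refine ⟨a * a', ja + ja', ?_, by rw [map_mul, pow_add]; ring⟩
      rw [D.leibniz, ha, ha', smul_zero, smul_zero, add_zero]
  -- Part 2
  have hpart2 : Transcendental A' (algebraMap B L r) := by
    intro halg
    obtain ⟨p, hp0, hpev⟩ := halg
    set n := p.natDegree with hn
    rw [Polynomial.aeval_eq_sum_range] at hpev
    choose a j ha hx using fun i : ℕ => hchar ((p.coeff i : L)) (p.coeff i).2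
    set M := (Finset.range (n + 1)).sup j with hM
    set c : ℕ → B := fun i => a i * (D r) ^ (M - j i) with hcdef
    have hcD : ∀ i, D (c i) = 0 := by
      intro i
      rw [hcdef]
      simp [D.leibniz, hDrpow, ha]
    have hsmul : ∀ (q : ↥A') (z : L), q • z = (q : L) * z := fun q z => rfl
    have hzero : algebraMap B L (∑ i ∈ Finset.range (n + 1), c i * r ^ i) = 0 := by
      rw [map_sum]
      have hterm : ∀ i ∈ Finset.range (n + 1),
          algebraMap B L (c i * r ^ i) = P ^ M * ((p.coeff i : L) * (algebraMap B L r) ^ i) := by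
        intro i hi
        have hMi : P ^ (M - j i) * P ^ (j i) = P ^ M :=
          pow_sub_mul_pow P (Finset.le_sup (f := j) hi)
        rw [hcdef]
        simp only [map_mul, map_pow, ← hPdef]
        rw [hx i]
        linear_combination (algebraMap B L (a i) * I ^ (j i) * (algebraMap B L r) ^ i) * hMi
          - (algebraMap B L (a i) * P ^ (M - j i) * (algebraMap B L r) ^ i) * hpowinv (j i)
      rw [Finset.sum_congr rfl hterm, ← Finset.mul_sum]
      have : ∑ i ∈ Finset.range (n + 1), (p.coeff i : L) * (algebraMap B L r) ^ i = 0 := by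
        rw [← hpev]
        exact Finset.sum_congr rfl fun i _ => (hsmul _ _).symm
      rw [this, mul_zero]
    have hzB : ∑ i ∈ Finset.range (n + 1), c i * r ^ i = 0 := by
      apply hinj
      rw [hzero, map_zero]
    have hcz := aux_indep D r hr n c hcD hzB
    have hcoeff : ∀ i, p.coeff i = 0 := by
      intro i
      rcases le_or_gt i n with hi | hi
      · have h1 : c i = 0 := hcz i hi
        rw [hcdef] at h1
        have h2 : a i = 0 := by
          rcases mul_eq_zero.mp h1 with h | h
          · exact h
          · exact absurd h (pow_ne_zero _ hr)
        have h3 : (p.coeff i : L) = 0 := by rw [hx i, h2, map_zero, zero_mul]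
        exact Subtype.ext h3
      · exact Polynomial.coeff_eq_zero_of_natDegree_lt hi
    exact hp0 (Polynomial.ext fun i => by rw [hcoeff i, Polynomial.coeff_zero])
  exact ⟨hpart1, hpart2⟩
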